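/- Let H be an infinite-dimensional complex Hilbert space and let 𝒯 ⊆ B₁ be a family of operators of norm at most 1. Then the family of adjoints 𝒯* = {T* : T ∈ 𝒯}, viewed as a family of maps H₁ → H₁, is UEC for the weak uniformity if and only if the family {φ_T : T ∈ 𝒯} of maps B₁ → B₁ given by φ_T(A) = A T is UEC for the weak operator uniformity. -/

import Mathlib

open scoped InnerProductSpace

/-- A family of maps `F k : H → H` (viewed as maps of the closed unit ball `H₁` to itself)
is *uniformly equicontinuous (UEC) for the weak uniformity* if for every `ε > 0` and all
vectors `x₁, …, x_N ∈ H₁` there exist `δ > 0` and vectors `w₁, …, w_M ∈ H₁` such that for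
all `ξ, η ∈ H₁` with `|⟪ξ - η, w_j⟫| < δ` for all `j`, and every member of the family,
`|⟪F k ξ - F k η, x_i⟫| < ε` for all `i`. -/
def UECweak {H : Type*} [NormedAddCommGroup H] [InnerProductSpace ℂ H]
    {ι : Type*} (F : ι → H → H) : Prop :=
  ∀ ε : ℝ, 0 < ε → ∀ (N : ℕ) (x : Fin N → H), (∀ i, ‖x i‖ ≤ 1) →
    ∃ (δ : ℝ) (M : ℕ) (w : Fin M → H), 0 < δ ∧ (∀ j, ‖w j‖ ≤ 1) ∧
      ∀ ξ η : H, ‖ξ‖ ≤ 1 → ‖η‖ ≤ 1 →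
        (∀ j, ‖⟪ξ - η, w j⟫_ℂ‖ < δ) →
        ∀ (k : ι) (i : Fin N), ‖⟪F k ξ - F k η, x i⟫_ℂ‖ < ε

/-- A family of maps `G k : B(H) → B(H)` (viewed as maps of the closed unit ball `B₁` to
itself) is *uniformly equicontinuous (UEC) for the weak operator uniformity* if for every
`ε > 0` and all vectors `x₁, …, x_N, y₁, …, y_N ∈ H₁` there exist `δ > 0` and vectors
`z₁, …, z_M, w₁, …, w_M ∈ H₁` such that for all `A, B ∈ B₁` with `|⟪(A - B) z_j, w_j⟫| < δ`
for all `j`, and every member of the family, `|⟪(G k A - G k B) x_i, y_i⟫| < ε` for all `i`. -/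
def UECwot {H : Type*} [NormedAddCommGroup H] [InnerProductSpace ℂ H]
    {ι : Type*} (G : ι → (H →L[ℂ] H) → (H →L[ℂ] H)) : Prop :=
  ∀ ε : ℝ, 0 < ε → ∀ (N : ℕ) (x y : Fin N → H), (∀ i, ‖x i‖ ≤ 1) → (∀ i, ‖y i‖ ≤ 1) →
    ∃ (δ : ℝ) (M : ℕ) (z w : Fin M → H), 0 < δ ∧ (∀ j, ‖z j‖ ≤ 1) ∧ (∀ j, ‖w j‖ ≤ 1) ∧
      ∀ A B : H →L[ℂ] H, ‖A‖ ≤ 1 → ‖B‖ ≤ 1 →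
        (∀ j, ‖⟪(A - B) (z j), w j⟫_ℂ‖ < δ) →
        ∀ (k : ι) (i : Fin N), ‖⟪(G k A - G k B) (x i), y i⟫_ℂ‖ < ε

/-- Let `H` be an infinite-dimensional complex Hilbert space and let `𝒯 ⊆ B₁` be a family
of operators of norm at most `1`.  Then the family of adjoints `𝒯* = {T* : T ∈ 𝒯}`, viewed
as a family of maps `H₁ → H₁`, is UEC for the weak uniformity if and only if the family
`{φ_T : T ∈ 𝒯}` of maps `B₁ → B₁` given by `φ_T A = A T` is UEC for the weak operator
uniformity. -/
theorem uecWeak_adjoint_iff_uecWot_rightMul {H : Type*} [NormedAddCommGroup H]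
    [InnerProductSpace ℂ H] [CompleteSpace H] (hinf : ¬ FiniteDimensional ℂ H)
    (𝒯 : Set (H →L[ℂ] H)) (h𝒯 : ∀ T ∈ 𝒯, ‖T‖ ≤ 1) :
    UECweak (fun T : 𝒯 => fun ξ : H => (ContinuousLinearMap.adjoint (T : H →L[ℂ] H)) ξ) ↔
      UECwot (fun T : 𝒯 => fun A : H →L[ℂ] H => A ∘L (T : H →L[ℂ] H)) := by
  constructor
  · intro h ε hε N x y hx hy
    obtain ⟨δ, M, w, hδ, hw, hcond⟩ := h ε hε N x hx
    refine ⟨δ, M * N, fun j => w (finProdFinEquiv.symm j).1,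
      fun j => y (finProdFinEquiv.symm j).2, hδ,
      fun j => hw _, fun j => hy _, ?_⟩
    intro A B hA hB hAB T i
    have key : ∀ (p : Fin M) (q : Fin N), ‖⟪(A - B) (w p), y q⟫_ℂ‖ < δ := by
      intro p q
      have := hAB (finProdFinEquiv (p, q))
      simpa using this
    set ξ := ContinuousLinearMap.adjoint A (y i) with hξdef
    set η := ContinuousLinearMap.adjoint B (y i) with hηdef
    have hξ : ‖ξ‖ ≤ 1 := by
      calc ‖ξ‖ ≤ ‖ContinuousLinearMap.adjoint A‖ * ‖y i‖ := ContinuousLinearMap.le_opNorm _ _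
        _ ≤ 1 * 1 := by
            gcongr
            · exact (ContinuousLinearMap.adjoint (𝕜 := ℂ)).norm_map A ▸ hA
            · exact hy i
        _ = 1 := one_mul 1
    have hη : ‖η‖ ≤ 1 := by
      calc ‖η‖ ≤ ‖ContinuousLinearMap.adjoint B‖ * ‖y i‖ := ContinuousLinearMap.le_opNorm _ _
        _ ≤ 1 * 1 := by
            gcongr
            · exact (ContinuousLinearMap.adjoint (𝕜 := ℂ)).norm_map B ▸ hB
            · exact hy i
        _ = 1 := one_mul 1
    have hprem : ∀ j, ‖⟪ξ - η, w j⟫_ℂ‖ < δ := by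
      intro j
      have : ⟪ξ - η, w j⟫_ℂ = (starRingEnd ℂ) ⟪(A - B) (w j), y i⟫_ℂ := by
        rw [inner_conj_symm]
        simp [hξdef, hηdef, inner_sub_left, ContinuousLinearMap.adjoint_inner_left,
          ContinuousLinearMap.sub_apply, inner_sub_right]
      rw [this, RCLike.norm_conj]
      exact key j i
    have := hcond ξ η hξ hη hprem T i
    have heq : ⟪(A ∘L (T : H →L[ℂ] H) - B ∘L (T : H →L[ℂ] H)) (x i), y i⟫_ℂ
        = (starRingEnd ℂ) ⟪ContinuousLinearMap.adjoint (T : H →L[ℂ] H) ξ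
            - ContinuousLinearMap.adjoint (T : H →L[ℂ] H) η, x i⟫_ℂ := by
      simp [hξdef, hηdef, inner_sub_left, ContinuousLinearMap.adjoint_inner_left,
        ContinuousLinearMap.sub_apply, ContinuousLinearMap.comp_apply, map_sub,
        inner_conj_symm]
    rw [heq, RCLike.norm_conj]
    exact this
  · intro h ε hε N x hx
    have hnt : Nontrivial H := by
      by_contra hc
      rw [not_nontrivial_iff_subsingleton] at hc
      exact hinf (Module.Finite.of_basis (Module.Basis.empty (ι := Empty) H))
    obtain ⟨x0, hx0⟩ := exists_ne (0 : H)
    set e : H := ‖x0‖⁻¹ • x0 with hedef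
    have he : ‖e‖ = 1 := by
      rw [hedef, norm_smul, norm_inv, norm_norm]
      field_simp [norm_ne_zero_iff.mpr hx0]
    obtain ⟨δ, M, z, w, hδ, hz, hw, hcond⟩ := h ε hε N x (fun _ => e) hx (fun _ => he.le)
    refine ⟨δ, M, z, hδ, hz, ?_⟩
    intro ξ η hξ hη hprem T i
    set Aop : H → (H →L[ℂ] H) := fun v => (innerSL ℂ v).smulRight e with hAopdef
    have hAopnorm : ∀ v : H, ‖v‖ ≤ 1 → ‖Aop v‖ ≤ 1 := by
      intro v hv
      rw [hAopdef]
      simp only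
      rw [ContinuousLinearMap.norm_smulRight_apply, innerSL_apply_norm, he, mul_one]
      exact hv
    have hprem' : ∀ j, ‖⟪(Aop ξ - Aop η) (z j), w j⟫_ℂ‖ < δ := by
      intro j
      have : ⟪(Aop ξ - Aop η) (z j), w j⟫_ℂ
          = (starRingEnd ℂ) ⟪ξ - η, z j⟫_ℂ * ⟪e, w j⟫_ℂ := by
        simp [hAopdef, inner_smul_left, inner_sub_left, sub_smul]
        ring
      rw [this, norm_mul, RCLike.norm_conj]
      calc ‖⟪ξ - η, z j⟫_ℂ‖ * ‖⟪e, w j⟫_ℂ‖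
          ≤ ‖⟪ξ - η, z j⟫_ℂ‖ * 1 := by
            gcongr
            calc ‖⟪e, w j⟫_ℂ‖ ≤ ‖e‖ * ‖w j‖ := norm_inner_le_norm _ _
              _ ≤ 1 * 1 := by rw [he]; gcongr; exact hw j
              _ = 1 := one_mul 1
        _ = ‖⟪ξ - η, z j⟫_ℂ‖ := mul_one _
        _ < δ := hprem j
    have := hcond (Aop ξ) (Aop η) (hAopnorm ξ hξ) (hAopnorm η hη) hprem' T i
    have hee : ⟪e, e⟫_ℂ = 1 := by
      rw [inner_self_eq_norm_sq_to_K, he]; norm_num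
    have heq : ⟪(Aop ξ ∘L (T : H →L[ℂ] H) - Aop η ∘L (T : H →L[ℂ] H)) (x i), e⟫_ℂ
        = (starRingEnd ℂ) ⟪ContinuousLinearMap.adjoint (T : H →L[ℂ] H) ξ
            - ContinuousLinearMap.adjoint (T : H →L[ℂ] H) η, x i⟫_ℂ := by
      simp only [hAopdef, ContinuousLinearMap.sub_apply, ContinuousLinearMap.comp_apply,
        ContinuousLinearMap.smulRight_apply, innerSL_apply_apply, inner_sub_left,
        inner_smul_left, ContinuousLinearMap.adjoint_inner_left, map_sub, hee,
        inner_conj_symm, mul_one]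
    rw [heq, RCLike.norm_conj] at this
    exact this
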